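/- For all integers n ≥ 1, l ≥ 1 and λ ≥ 1, the following recursion identities hold as polynomial identities: f^{(nl)}_λ(x|a₁,…,a_{n−1},a|b₁,…,b_{l−1},aτ²) = f^{(n−1,l−1)}_λ(x|a₁,…,a_{n−1}|b₁,…,b_{l−1}) − aτ³ · f^{(n−1,l−1)}_{λ−1}(x|a₁,…,a_{n−1}|b₁,…,b_{l−1}), and g^{(n)}_λ(x|a₁,…,a_{n−1},a) = g^{(n−1)}_λ(x|a₁,…,a_{n−1}) − aτ · g^{(n−1)}_{λ−1}(x|a₁,…,a_{n−1}). -/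

import Mathlib

open Finset Function

noncomputable section

/-- The infinite product `(z;p)_∞ = ∏_{k≥0} (1 - z p^k)`. -/
def pochInf (z p : ℂ) : ℂ := ∏' k : ℕ, (1 - z * p ^ k)

/-- `ψ(z) = 1/((zq;q⁴)_∞ (z⁻¹q;q⁴)_∞)`. -/
def psiF (q z : ℂ) : ℂ := 1 / (pochInf (z * q) (q ^ 4) * pochInf (z⁻¹ * q) (q ^ 4))

/-- The kernel `Ψ(x₁,…,xₙ|z₁,…,z_N) = ϑ(x|z)·∏_{μ,j} ψ(x_μ/z_j)`. -/
def kerPsi (q : ℂ) {n N : ℕ} (θ : (Fin n → ℂ) → (Fin N → ℂ) → ℂ)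
    (x : Fin n → ℂ) (z : Fin N → ℂ) : ℂ :=
  θ x z * ∏ μ : Fin n, ∏ j : Fin N, psiF q (x μ / z j)

/-- One-variable kernel `Ψ(x|z₁,…,z_N) = ϑ(x|z)·∏_j ψ(x/z_j)`. -/
def kerPsi1 (q : ℂ) {N : ℕ} (θ : ℂ → (Fin N → ℂ) → ℂ) (x : ℂ) (z : Fin N → ℂ) : ℂ :=
  θ x z * ∏ j : Fin N, psiF q (x / z j)

/-- Elementary symmetric polynomial `σ_κ(a₁,…,a_m)`. -/
def esym {m : ℕ} (a : Fin m → ℂ) (κ : ℕ) : ℂ :=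
  ∑ s ∈ Finset.powersetCard κ (Finset.univ : Finset (Fin m)), ∏ i ∈ s, a i

/-- Complete homogeneous symmetric polynomial `σ̃_κ(a₁,…,a_m)`. -/
def hsym {m : ℕ} (a : Fin m → ℂ) (κ : ℕ) : ℂ :=
  ∑ μ ∈ (Finset.univ : Finset (Fin m)).sym κ, (Multiset.map a (μ : Multiset (Fin m))).prod

/-- `h^{(m)}(x|z) = x⁻¹(∏_j (x - z_jτ) - τ^{2m} ∏_j (x - z_jτ⁻¹))` as a polynomial in `x`
(the bracket vanishes at `x = 0`, so division is exact). -/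
def hN (τ : ℂ) {m : ℕ} (z : Fin m → ℂ) : Polynomial ℂ :=
  ((∏ j : Fin m, (Polynomial.X - Polynomial.C (z j * τ)))
      - Polynomial.C (τ ^ (2 * m)) * ∏ j : Fin m, (Polynomial.X - Polynomial.C (z j * τ⁻¹)))
    /ₘ Polynomial.X

/-- `φ^{(nl)}_{λκ}(a|b)`. -/
def phiP (τ : ℂ) {n l : ℕ} (lam κ : ℕ) (a : Fin n → ℂ) (b : Fin l → ℂ) : ℂ :=
  esym b κ - ∑ β ∈ Finset.Icc lam κ, ∑ α ∈ Finset.Icc lam β,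
    (-1 : ℂ) ^ (β - α) * τ ^ (2 * β) * esym b (κ - β) * esym a α * hsym a (β - α)

/-- `f^{(nl)}_λ(x|a|b) = Σ_{κ=0}^{l−n+λ−2} (1 − τ^{2(l−n+λ−1−κ)})(−τ)^κ φ^{(nl)}_{λκ}(a|b)
x^{l−n+λ−2−κ}` (empty sum if `l−n+λ−2 < 0`). -/
def fP (τ : ℂ) {n l : ℕ} (lam : ℕ) (x : ℂ) (a : Fin n → ℂ) (b : Fin l → ℂ) : ℂ :=
  ∑ κ ∈ Finset.range ((l : ℤ) - n + lam - 1).toNat,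
    (1 - τ ^ (2 * (((l : ℤ) - n + lam - 1).toNat - κ))) * (-τ) ^ κ * phiP τ lam κ a b
      * x ^ (((l : ℤ) - n + lam - 1).toNat - 1 - κ)

/-- `g^{(n)}_λ(x|a) = Σ_{κ=0}^{λ−2} (1 − τ^{2(λ−1−κ)})(−τ)^κ σ_κ(a) x^{λ−2−κ}`. -/
def gP (τ : ℂ) {n : ℕ} (lam : ℕ) (x : ℂ) (a : Fin n → ℂ) : ℂ :=
  ∑ κ ∈ Finset.range (lam - 1),
    (1 - τ ^ (2 * (lam - 1 - κ))) * (-τ) ^ κ * esym a κ * x ^ (lam - 2 - κ)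

/-- `A^{(nl)}_λ(x|a|b)`. -/
def AP (τ : ℂ) {n l : ℕ} (lam : ℕ) (x : ℂ) (a : Fin n → ℂ) (b : Fin l → ℂ) : ℂ :=
  (∏ j : Fin n, (x - a j * τ)) * fP τ lam x a b
    + τ ^ (2 * (l - n + lam - 1)) * (∏ i : Fin l, (x - b i * τ⁻¹)) * gP τ lam x a

/-- `Δ^{(nl)}(x₁,…,xₙ|a|b) = det(A^{(nl)}_λ(x_μ|a|b))_{1 ≤ λ,μ ≤ n}`. -/
def DeltaP (τ : ℂ) {n l : ℕ} (x : Fin n → ℂ) (a : Fin n → ℂ) (b : Fin l → ℂ) : ℂ :=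
  Matrix.det (Matrix.of fun lam μ : Fin n => AP τ ((lam : ℕ) + 1) (x μ) a b)

/-- The explicit `Δ(x|z₁|b₁,…,b_m)` of the case `n = 1` (here `m = N − 1`):
`(x−z₁τ)·Σ_{κ=0}^{N−3}(1−τ^{2(N−2−κ)})(−τ)^κ x^{N−3−κ} Σ_{λ=0}^{κ}(−z₁τ²)^λ σ_{κ−λ}(b)`. -/
def Delta1 (τ : ℂ) {m : ℕ} (x z1 : ℂ) (b : Fin m → ℂ) : ℂ :=
  (x - z1 * τ) * ∑ κ ∈ Finset.range (m - 1),
    (1 - τ ^ (2 * (m - 1 - κ))) * (-τ) ^ κ * x ^ (m - 2 - κ) *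
      ∑ lam ∈ Finset.range (κ + 1), (-(z1 * τ ^ 2)) ^ lam * esym b (κ - lam)

/-- Iterated contour integral over `n` copies of the anticlockwise circle `|x| = ρ`. -/
def multiCircle : (n : ℕ) → ((Fin n → ℂ) → ℂ) → ℝ → ℂ
  | 0, f, _ => f (fun i => i.elim0)
  | n + 1, f, ρ => ∮ t in C(0, ρ), multiCircle n (fun x => f (Fin.cons t x)) ρ

/-- `H(a|b) = ∮⋯∮ F(x|a,b) Ψ(x|a,b) dx₁⋯dxₙ` with
`F = Δ^{(nl)}(x|a|b)/∏_{j,i}(b_i − a_jτ²)`. -/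
def Hfun (q τ : ℂ) {n l : ℕ} (θ : (Fin n → ℂ) → (Fin (n + l) → ℂ) → ℂ)
    (a : Fin n → ℂ) (b : Fin l → ℂ) (ρ : ℝ) : ℂ :=
  multiCircle n (fun x =>
    (DeltaP τ x a b / ∏ j : Fin n, ∏ i : Fin l, (b i - a j * τ ^ 2)) *
      kerPsi q θ x (Fin.append a b)) ρ

/-- The radius `ρ` separates the poles: `max_i |w_i q| < ρ < min_i |w_i q⁻¹|`
for the tuple `w = (a, b)`. -/
def admissible (q : ℂ) {n l : ℕ} (a : Fin n → ℂ) (b : Fin l → ℂ) (ρ : ℝ) : Prop :=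
  (∀ j, ‖a j * q‖ < ρ) ∧ (∀ j, ρ < ‖a j * q⁻¹‖) ∧
  (∀ i, ‖b i * q‖ < ρ) ∧ (∀ i, ρ < ‖b i * q⁻¹‖)

/-- The denominator of `F` does not vanish: `w_i − w_jτ² ≠ 0` for `1 ≤ j ≤ n < i ≤ N`. -/
def regularF (τ : ℂ) {n l : ℕ} (a : Fin n → ℂ) (b : Fin l → ℂ) : Prop :=
  ∀ (j : Fin n) (i : Fin l), b i - a j * τ ^ 2 ≠ 0

end


noncomputable section StmtAux

lemma esym_zero {m : ℕ} (a : Fin m → ℂ) : esym a 0 = 1 := by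
  simp [esym]

lemma esym_poly {m : ℕ} (a : Fin m → ℂ) (κ : ℕ) :
    esym a κ = (∏ i : Fin m, (Polynomial.C (a i) * Polynomial.X + 1)).coeff κ := by
  rw [Finset.prod_add]
  simp only [Finset.prod_const_one, mul_one]
  have h1 : ∀ t : Finset (Fin m), (∏ i ∈ t, (Polynomial.C (a i) * Polynomial.X))
      = Polynomial.C (∏ i ∈ t, a i) * Polynomial.X ^ t.card := by
    intro t
    rw [Finset.prod_mul_distrib, Finset.prod_const, map_prod]
  rw [Finset.sum_congr rfl fun t _ => h1 t, Polynomial.finset_sum_coeff]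
  simp only [Polynomial.coeff_C_mul, Polynomial.coeff_X_pow]
  rw [esym, Finset.powersetCard_eq_filter, Finset.sum_filter]
  refine Finset.sum_congr rfl fun t _ => ?_
  by_cases h : t.card = κ
  · simp [h]
  · simp [h, Ne.symm h]

lemma esym_snoc {m : ℕ} (a : Fin m → ℂ) (a0 : ℂ) (κ : ℕ) :
    esym (Fin.snoc a a0 : Fin (m+1) → ℂ) (κ + 1) = esym a (κ + 1) + a0 * esym a κ := by
  have hp : (∏ i : Fin (m+1), (Polynomial.C (Fin.snoc a a0 i) * Polynomial.X + 1))
      = (∏ i : Fin m, (Polynomial.C (a i) * Polynomial.X + 1))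
        * (Polynomial.C a0 * Polynomial.X + 1) := by
    rw [Fin.prod_univ_castSucc]
    simp [Fin.snoc_castSucc, Fin.snoc_last]
  rw [esym_poly, hp, esym_poly a, esym_poly a κ]
  have : (∏ i : Fin m, (Polynomial.C (a i) * Polynomial.X + 1))
      * (Polynomial.C a0 * Polynomial.X + 1)
      = ((∏ i : Fin m, (Polynomial.C (a i) * Polynomial.X + 1)) * Polynomial.X)
          * Polynomial.C a0
        + (∏ i : Fin m, (Polynomial.C (a i) * Polynomial.X + 1)) := by ring
  rw [this, Polynomial.coeff_add, Polynomial.coeff_mul_C, Polynomial.coeff_mul_X]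
  ring

lemma hsym_zero {m : ℕ} (a : Fin m → ℂ) : hsym a 0 = 1 := by
  have h0 : ((∅ : Sym (Fin m) 0) : Multiset (Fin m)) = 0 := rfl
  simp [hsym, Finset.sym_zero, h0]

lemma multiset_exists_preimage {α β : Type*} (f : α → β) (s : Multiset β)
    (h : ∀ x ∈ s, ∃ y, f y = x) : ∃ t : Multiset α, t.map f = s := by
  induction s using Multiset.induction with
  | empty => exact ⟨0, rfl⟩
  | cons x s ih =>
    obtain ⟨y, hy⟩ := h x (Multiset.mem_cons_self x s)
    obtain ⟨t, ht⟩ := ih (fun z hz => h z (Multiset.mem_cons_of_mem hz))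
    exact ⟨y ::ₘ t, by simp [hy, ht]⟩

lemma hsym_snoc {m : ℕ} (a : Fin m → ℂ) (a0 : ℂ) (n : ℕ) :
    hsym (Fin.snoc a a0 : Fin (m+1) → ℂ) (n + 1)
      = hsym a (n + 1) + a0 * hsym (Fin.snoc a a0 : Fin (m+1) → ℂ) n := by
  classical
  set a' : Fin (m+1) → ℂ := Fin.snoc a a0 with ha'
  have key := Finset.sum_filter_add_sum_filter_not
    ((Finset.univ : Finset (Fin (m+1))).sym (n+1)) (fun μ => Fin.last m ∈ μ)
    (fun μ => (Multiset.map a' (μ : Multiset (Fin (m+1)))).prod)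
  have hA : ∑ μ ∈ Finset.filter (fun μ => Fin.last m ∈ μ)
        ((Finset.univ : Finset (Fin (m+1))).sym (n+1)),
        (Multiset.map a' (μ : Multiset (Fin (m+1)))).prod
      = a0 * hsym a' n := by
    rw [hsym, Finset.mul_sum]
    refine (Finset.sum_bij (fun t _ => Fin.last m ::ₛ t) ?_ ?_ ?_ ?_).symm
    · intro t _
      refine Finset.mem_filter.2 ⟨Finset.mem_sym_iff.2 fun x _ => Finset.mem_univ x,
        Sym.mem_cons_self _ _⟩
    · intro t1 _ t2 _ h
      exact (Sym.cons_inj_right _ _ _).1 h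
    · intro μ hμ
      obtain ⟨t, rfl⟩ := Sym.exists_cons_of_mem (Finset.mem_filter.1 hμ).2
      exact ⟨t, Finset.mem_sym_iff.2 fun x _ => Finset.mem_univ x, rfl⟩
    · intro t _
      rw [Sym.coe_cons, Multiset.map_cons, Multiset.prod_cons, ha']
      simp [Fin.snoc_last]
  have hB : ∑ μ ∈ Finset.filter (fun μ => ¬ Fin.last m ∈ μ)
        ((Finset.univ : Finset (Fin (m+1))).sym (n+1)),
        (Multiset.map a' (μ : Multiset (Fin (m+1)))).prod
      = hsym a (n+1) := by
    rw [hsym]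
    refine (Finset.sum_bij (fun t _ => Sym.map Fin.castSucc t) ?_ ?_ ?_ ?_).symm
    · intro t _
      refine Finset.mem_filter.2 ⟨Finset.mem_sym_iff.2 fun x _ => Finset.mem_univ x, ?_⟩
      intro hmem
      obtain ⟨x, _, hx⟩ := Sym.mem_map.1 hmem
      exact absurd hx (Fin.castSucc_lt_last x).ne
    · intro t1 _ t2 _ h
      exact Sym.map_injective (Fin.castSucc_injective m) _ h
    · intro μ hμ
      have hlast : Fin.last m ∉ μ := (Finset.mem_filter.1 hμ).2
      obtain ⟨t0, ht0⟩ := multiset_exists_preimage Fin.castSucc (μ : Multiset (Fin (m+1)))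
        (fun x hx => ⟨x.castPred (by rintro rfl; exact hlast hx),
          Fin.castSucc_castPred _ _⟩)
      have hcard : Multiset.card t0 = n + 1 := by
        have := congrArg Multiset.card ht0
        simpa using this
      refine ⟨⟨t0, hcard⟩, Finset.mem_sym_iff.2 fun x _ => Finset.mem_univ x, ?_⟩
      exact Sym.coe_injective (by simpa [Sym.coe_map] using ht0)
    · intro t _
      rw [Sym.coe_map, Multiset.map_map]
      congr 1
      refine Multiset.map_congr rfl fun x _ => ?_
      simp [ha', Fin.snoc_castSucc]
  rw [hA, hB] at key
  rw [hsym, ← key]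
  ring

def Tq {m : ℕ} (a : Fin m → ℂ) (lam β : ℕ) : ℂ :=
  ∑ α ∈ Finset.Icc lam β, (-1:ℂ)^(β-α) * esym a α * hsym a (β-α)

lemma Tq_eq_zero {m : ℕ} (a : Fin m → ℂ) (lam β : ℕ) (h : β < lam) : Tq a lam β = 0 := by
  rw [Tq, Finset.Icc_eq_empty (by omega), Finset.sum_empty]

lemma sum_Icc_shift (f : ℕ → ℂ) (l β : ℕ) :
    ∑ α ∈ Finset.Icc (l+1) (β+1), f α = ∑ γ ∈ Finset.Icc l β, f (γ+1) := by
  rw [← Finset.map_add_right_Icc, Finset.sum_map]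
  rfl

lemma Tstar {m : ℕ} (a : Fin m → ℂ) (a0 : ℂ) (l β : ℕ) :
    Tq (Fin.snoc a a0 : Fin (m+1) → ℂ) (l+1) (β+1)
        + a0 * Tq (Fin.snoc a a0 : Fin (m+1) → ℂ) (l+1) β
      = Tq a (l+1) (β+1) + a0 * Tq a l β := by
  rcases lt_or_ge β l with h | h
  · rw [Tq_eq_zero _ _ _ (by omega), Tq_eq_zero _ _ _ (by omega),
      Tq_eq_zero _ _ _ (by omega), Tq_eq_zero _ _ _ (by omega)]
  · have hsplit : Tq (Fin.snoc a a0 : Fin (m+1) → ℂ) (l+1) (β+1)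
        = ((∑ α ∈ Finset.Icc (l+1) β, (-1:ℂ)^(β+1-α)
              * esym (Fin.snoc a a0 : Fin (m+1) → ℂ) α * hsym a (β+1-α))
            + esym (Fin.snoc a a0 : Fin (m+1) → ℂ) (β+1))
          - a0 * Tq (Fin.snoc a a0 : Fin (m+1) → ℂ) (l+1) β := by
      rw [Tq, Finset.sum_Icc_succ_top (by omega : l+1 ≤ β+1)]
      have hterm : ∀ α ∈ Finset.Icc (l+1) β,
          (-1:ℂ)^(β+1-α) * esym (Fin.snoc a a0 : Fin (m+1) → ℂ) α
              * hsym (Fin.snoc a a0 : Fin (m+1) → ℂ) (β+1-α)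
            = (-1:ℂ)^(β+1-α) * esym (Fin.snoc a a0 : Fin (m+1) → ℂ) α * hsym a (β+1-α)
              - a0 * ((-1:ℂ)^(β-α) * esym (Fin.snoc a a0 : Fin (m+1) → ℂ) α
                  * hsym (Fin.snoc a a0 : Fin (m+1) → ℂ) (β-α)) := by
        intro α hα
        have hle : α ≤ β := (Finset.mem_Icc.1 hα).2
        have h1 : β+1-α = (β-α)+1 := by omega
        have h2 : (-1:ℂ)^(β+1-α) = -(-1:ℂ)^(β-α) := by rw [h1, pow_succ]; ring
        rw [h1, hsym_snoc, ← h1, h2]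
        ring
      rw [Finset.sum_congr rfl hterm, Finset.sum_sub_distrib, ← Finset.mul_sum, Tq]
      simp [hsym_zero]
      ring
    have hU : (∑ α ∈ Finset.Icc (l+1) β, (-1:ℂ)^(β+1-α)
            * esym (Fin.snoc a a0 : Fin (m+1) → ℂ) α * hsym a (β+1-α))
          + esym (Fin.snoc a a0 : Fin (m+1) → ℂ) (β+1)
        = ∑ α ∈ Finset.Icc (l+1) (β+1), (-1:ℂ)^(β+1-α)
            * esym (Fin.snoc a a0 : Fin (m+1) → ℂ) α * hsym a (β+1-α) := by
      rw [Finset.sum_Icc_succ_top (by omega : l+1 ≤ β+1)]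
      simp [hsym_zero]
      try ring
    have hU2 : ∑ α ∈ Finset.Icc (l+1) (β+1), (-1:ℂ)^(β+1-α)
            * esym (Fin.snoc a a0 : Fin (m+1) → ℂ) α * hsym a (β+1-α)
        = Tq a (l+1) (β+1) + a0 * Tq a l β := by
      rw [sum_Icc_shift]
      have hterm : ∀ γ ∈ Finset.Icc l β,
          (-1:ℂ)^(β+1-(γ+1)) * esym (Fin.snoc a a0 : Fin (m+1) → ℂ) (γ+1)
              * hsym a (β+1-(γ+1))
            = (-1:ℂ)^(β-γ) * esym a (γ+1) * hsym a (β-γ)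
              + a0 * ((-1:ℂ)^(β-γ) * esym a γ * hsym a (β-γ)) := by
        intro γ hγ
        have h1 : β+1-(γ+1) = β-γ := by omega
        rw [h1, esym_snoc]
        ring
      rw [Finset.sum_congr rfl hterm, Finset.sum_add_distrib, ← Finset.mul_sum]
      congr 1
      · rw [Tq, sum_Icc_shift]
        refine Finset.sum_congr rfl fun γ hγ => ?_
        have h1 : β+1-(γ+1) = β-γ := by omega
        rw [h1]
    rw [hsplit, ← hU2, ← hU]
    ring

def Sq (τ : ℂ) {m k : ℕ} (lam κ : ℕ) (a : Fin m → ℂ) (b : Fin k → ℂ) : ℂ :=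
  ∑ β ∈ Finset.Icc lam κ, τ^(2*β) * esym b (κ-β) * Tq a lam β

lemma phiP_eq (τ : ℂ) {m k : ℕ} (lam κ : ℕ) (a : Fin m → ℂ) (b : Fin k → ℂ) :
    phiP τ lam κ a b = esym b κ - Sq τ lam κ a b := by
  rw [phiP, Sq]
  congr 1
  refine Finset.sum_congr rfl fun β _ => ?_
  rw [Tq, Finset.mul_sum]
  refine Finset.sum_congr rfl fun α _ => ?_
  ring

lemma Sq_eq_zero (τ : ℂ) {m k : ℕ} (lam κ : ℕ) (a : Fin m → ℂ) (b : Fin k → ℂ)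
    (h : κ < lam) : Sq τ lam κ a b = 0 := by
  rw [Sq, Finset.Icc_eq_empty (by omega), Finset.sum_empty]

lemma Sq_snoc (τ : ℂ) {m k : ℕ} (l κ' : ℕ) (a : Fin m → ℂ) (b : Fin k → ℂ) (a0 : ℂ) :
    Sq τ (l+1) (κ'+1) (Fin.snoc a a0 : Fin (m+1) → ℂ)
        (Fin.snoc b (a0 * τ^2) : Fin (k+1) → ℂ)
      = Sq τ (l+1) (κ'+1) a b + (a0 * τ^2) * Sq τ l κ' a b := by
  rcases lt_or_ge κ' l with h | h
  · rw [Sq_eq_zero _ _ _ _ _ (by omega), Sq_eq_zero _ _ _ _ _ (by omega),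
      Sq_eq_zero _ _ _ _ _ (by omega)]
    ring
  · have hA : Sq τ (l+1) (κ'+1) (Fin.snoc a a0 : Fin (m+1) → ℂ)
          (Fin.snoc b (a0 * τ^2) : Fin (k+1) → ℂ)
        = (∑ β ∈ Finset.Icc (l+1) (κ'+1), τ^(2*β) * esym b (κ'+1-β)
            * Tq (Fin.snoc a a0 : Fin (m+1) → ℂ) (l+1) β)
          + (a0 * τ^2) * ∑ β ∈ Finset.Icc (l+1) κ', τ^(2*β) * esym b (κ'-β)
            * Tq (Fin.snoc a a0 : Fin (m+1) → ℂ) (l+1) β := by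
      rw [Sq, Finset.sum_Icc_succ_top (by omega : l+1 ≤ κ'+1),
        Finset.sum_Icc_succ_top (by omega : l+1 ≤ κ'+1)]
      have hterm : ∀ β ∈ Finset.Icc (l+1) κ',
          τ^(2*β) * esym (Fin.snoc b (a0 * τ^2) : Fin (k+1) → ℂ) (κ'+1-β)
              * Tq (Fin.snoc a a0 : Fin (m+1) → ℂ) (l+1) β
            = τ^(2*β) * esym b (κ'+1-β) * Tq (Fin.snoc a a0 : Fin (m+1) → ℂ) (l+1) β
              + (a0 * τ^2) * (τ^(2*β) * esym b (κ'-β)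
                  * Tq (Fin.snoc a a0 : Fin (m+1) → ℂ) (l+1) β) := by
        intro β hβ
        have hle : β ≤ κ' := (Finset.mem_Icc.1 hβ).2
        have h1 : κ'+1-β = (κ'-β)+1 := by omega
        rw [h1, esym_snoc, ← h1]
        ring
      rw [Finset.sum_congr rfl hterm, Finset.sum_add_distrib, ← Finset.mul_sum]
      simp [esym_zero]
      ring
    have hB : ∑ β ∈ Finset.Icc (l+1) (κ'+1), τ^(2*β) * esym b (κ'+1-β)
          * Tq (Fin.snoc a a0 : Fin (m+1) → ℂ) (l+1) β
        = Sq τ (l+1) (κ'+1) a b + (a0 * τ^2) * Sq τ l κ' a b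
          - (a0 * τ^2) * ∑ γ ∈ Finset.Icc l κ', τ^(2*γ) * esym b (κ'-γ)
            * Tq (Fin.snoc a a0 : Fin (m+1) → ℂ) (l+1) γ := by
      rw [sum_Icc_shift]
      have hterm : ∀ γ ∈ Finset.Icc l κ',
          τ^(2*(γ+1)) * esym b (κ'+1-(γ+1))
              * Tq (Fin.snoc a a0 : Fin (m+1) → ℂ) (l+1) (γ+1)
            = τ^(2*(γ+1)) * esym b (κ'+1-(γ+1)) * Tq a (l+1) (γ+1)
              + (a0 * τ^2) * (τ^(2*γ) * esym b (κ'-γ) * Tq a l γ)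
              - (a0 * τ^2) * (τ^(2*γ) * esym b (κ'-γ)
                  * Tq (Fin.snoc a a0 : Fin (m+1) → ℂ) (l+1) γ) := by
        intro γ hγ
        have hstar := Tstar a a0 l γ
        have h1 : κ'+1-(γ+1) = κ'-γ := by omega
        have h2 : 2*(γ+1) = 2*γ + 2 := by omega
        rw [h1, h2, pow_add]
        linear_combination (τ^(2*γ) * τ^2 * esym b (κ'-γ)) * hstar
      rw [Finset.sum_congr rfl hterm, Finset.sum_sub_distrib, Finset.sum_add_distrib,
        ← Finset.mul_sum, ← Finset.mul_sum]
      congr 2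
      rw [Sq, sum_Icc_shift]
    have hC : ∑ γ ∈ Finset.Icc l κ', τ^(2*γ) * esym b (κ'-γ)
          * Tq (Fin.snoc a a0 : Fin (m+1) → ℂ) (l+1) γ
        = ∑ β ∈ Finset.Icc (l+1) κ', τ^(2*β) * esym b (κ'-β)
          * Tq (Fin.snoc a a0 : Fin (m+1) → ℂ) (l+1) β := by
      rw [Finset.Icc_eq_cons_Ioc h, Finset.sum_cons,
        Tq_eq_zero _ _ _ (Nat.lt_succ_self l), ← Finset.Icc_add_one_left_eq_Ioc]
      ring
    rw [hA, hB, hC]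
    ring

lemma phiP_snoc_zero (τ : ℂ) {m k : ℕ} (l : ℕ) (a : Fin m → ℂ) (b : Fin k → ℂ) (a0 : ℂ) :
    phiP τ (l+1) 0 (Fin.snoc a a0 : Fin (m+1) → ℂ)
        (Fin.snoc b (a0 * τ^2) : Fin (k+1) → ℂ)
      = phiP τ (l+1) 0 a b := by
  rw [phiP_eq, phiP_eq, Sq_eq_zero _ _ _ _ _ (by omega), Sq_eq_zero _ _ _ _ _ (by omega),
    esym_zero, esym_zero]

lemma phiP_snoc_succ (τ : ℂ) {m k : ℕ} (l κ' : ℕ) (a : Fin m → ℂ) (b : Fin k → ℂ) (a0 : ℂ) :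
    phiP τ (l+1) (κ'+1) (Fin.snoc a a0 : Fin (m+1) → ℂ)
        (Fin.snoc b (a0 * τ^2) : Fin (k+1) → ℂ)
      = phiP τ (l+1) (κ'+1) a b + (a0 * τ^2) * phiP τ l κ' a b := by
  rw [phiP_eq, phiP_eq, phiP_eq, Sq_snoc, esym_snoc]
  ring

lemma gP_snoc {m : ℕ} (τ x a0 : ℂ) (l : ℕ) (a : Fin m → ℂ) :
    gP τ (l+1) x (Fin.snoc a a0 : Fin (m+1) → ℂ)
      = gP τ (l+1) x a - a0 * τ * gP τ l x a := by
  cases l with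
  | zero => simp [gP]
  | succ l' =>
    have norm1 : ∀ (M : ℕ) (v : Fin M → ℂ), gP τ (l'+1+1) x v
        = ∑ κ ∈ Finset.range (l'+1),
            (1 - τ^(2*(l'+1-κ))) * (-τ)^κ * esym v κ * x^(l'-κ) := by
      intro M v
      rw [gP]
      refine Finset.sum_congr (by rw [show l'+1+1-1 = l'+1 by omega]) fun κ _ => ?_
      rw [show 2*(l'+1+1-1-κ) = 2*(l'+1-κ) by omega, show l'+1+1-2-κ = l'-κ by omega]
    have norm2 : gP τ (l'+1) x a
        = ∑ κ ∈ Finset.range l',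
            (1 - τ^(2*(l'-κ))) * (-τ)^κ * esym a κ * x^(l'-1-κ) := by
      rw [gP]
      refine Finset.sum_congr (by rw [show l'+1-1 = l' by omega]) fun κ _ => ?_
      rw [show 2*(l'+1-1-κ) = 2*(l'-κ) by omega, show l'+1-2-κ = l'-1-κ by omega]
    rw [norm1 _ (Fin.snoc a a0 : Fin (m+1) → ℂ), norm1 _ a, norm2,
      Finset.sum_range_succ' (fun κ => (1 - τ^(2*(l'+1-κ))) * (-τ)^κ
        * esym (Fin.snoc a a0 : Fin (m+1) → ℂ) κ * x^(l'-κ)) l',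
      Finset.sum_range_succ' (fun κ => (1 - τ^(2*(l'+1-κ))) * (-τ)^κ
        * esym a κ * x^(l'-κ)) l']
    have hterm : ∀ j ∈ Finset.range l',
        (1 - τ^(2*(l'+1-(j+1)))) * (-τ)^(j+1)
            * esym (Fin.snoc a a0 : Fin (m+1) → ℂ) (j+1) * x^(l'-(j+1))
          = (1 - τ^(2*(l'+1-(j+1)))) * (-τ)^(j+1) * esym a (j+1) * x^(l'-(j+1))
            + (-(a0*τ)) * ((1 - τ^(2*(l'-j))) * (-τ)^j * esym a j * x^(l'-1-j)) := by
      intro j hj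
      rw [esym_snoc, show l'+1-(j+1) = l'-j by omega, show l'-(j+1) = l'-1-j by omega,
        pow_succ]
      ring
    rw [Finset.sum_congr rfl hterm, Finset.sum_add_distrib, ← Finset.mul_sum,
      esym_zero, esym_zero]
    ring

lemma main_sum {m k : ℕ} (τ x a0 : ℂ) (l : ℕ) (a : Fin m → ℂ) (b : Fin k → ℂ)
    (M M2 : ℕ) (hM2 : M2 = M - 1) :
    ∑ κ ∈ Finset.range M, (1 - τ^(2*(M-κ))) * (-τ)^κ
        * phiP τ (l+1) κ (Fin.snoc a a0 : Fin (m+1) → ℂ)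
          (Fin.snoc b (a0*τ^2) : Fin (k+1) → ℂ) * x^(M-1-κ)
      = (∑ κ ∈ Finset.range M, (1 - τ^(2*(M-κ))) * (-τ)^κ * phiP τ (l+1) κ a b * x^(M-1-κ))
        - a0*τ^3 * ∑ κ ∈ Finset.range M2,
            (1 - τ^(2*(M2-κ))) * (-τ)^κ * phiP τ l κ a b * x^(M2-1-κ) := by
  cases M with
  | zero =>
    have : M2 = 0 := by omega
    subst this
    simp
  | succ M' =>
    have hM2' : M2 = M' := by omega
    rw [hM2']
    rw [Finset.sum_range_succ' (fun κ => (1 - τ^(2*(M'+1-κ))) * (-τ)^κ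
        * phiP τ (l+1) κ (Fin.snoc a a0 : Fin (m+1) → ℂ)
          (Fin.snoc b (a0*τ^2) : Fin (k+1) → ℂ) * x^(M'+1-1-κ)) M',
      Finset.sum_range_succ' (fun κ => (1 - τ^(2*(M'+1-κ))) * (-τ)^κ
        * phiP τ (l+1) κ a b * x^(M'+1-1-κ)) M']
    have hterm : ∀ j ∈ Finset.range M',
        (1 - τ^(2*(M'+1-(j+1)))) * (-τ)^(j+1)
            * phiP τ (l+1) (j+1) (Fin.snoc a a0 : Fin (m+1) → ℂ)
              (Fin.snoc b (a0*τ^2) : Fin (k+1) → ℂ) * x^(M'+1-1-(j+1))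
          = (1 - τ^(2*(M'+1-(j+1)))) * (-τ)^(j+1) * phiP τ (l+1) (j+1) a b * x^(M'+1-1-(j+1))
            + (-(a0*τ^3)) * ((1 - τ^(2*(M'-j))) * (-τ)^j * phiP τ l j a b * x^(M'-1-j)) := by
      intro j hj
      rw [phiP_snoc_succ, show M'+1-(j+1) = M'-j by omega,
        show M'+1-1-(j+1) = M'-1-j by omega, pow_succ]
      ring
    rw [Finset.sum_congr rfl hterm, Finset.sum_add_distrib, ← Finset.mul_sum,
      phiP_snoc_zero]
    ring


end StmtAux

/-- recursion for `f^{(nl)}_λ` and `g^{(n)}_λ`; here `n = m + 1 ≥ 1`,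
`l = k + 1 ≥ 1`, `λ ≥ 1`. -/
theorem stmt_10 (q : ℂ) (hq0 : 0 < ‖q‖) (hq1 : ‖q‖ < 1)
    (τ : ℂ) (hτ : τ = q⁻¹) (m k lam : ℕ) (hlam : 1 ≤ lam)
    (x a0 : ℂ) (a : Fin m → ℂ) (b : Fin k → ℂ) :
    fP τ lam x (Fin.snoc a a0) (Fin.snoc b (a0 * τ ^ 2))
        = fP τ lam x a b - a0 * τ ^ 3 * fP τ (lam - 1) x a b
    ∧ gP τ lam x (Fin.snoc a a0) = gP τ lam x a - a0 * τ * gP τ (lam - 1) x a := by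
  obtain ⟨l, rfl⟩ : ∃ l, lam = l + 1 := ⟨lam - 1, by omega⟩
  simp only [Nat.add_sub_cancel]
  constructor
  · rw [fP, fP, fP,
      show ((↑(k+1) : ℤ) - ↑(m+1) + ↑(l+1) - 1) = (k : ℤ) - m + l by push_cast; ring,
      show ((k : ℤ) - (m : ℤ) + ↑(l+1) - 1) = (k : ℤ) - m + l by push_cast; ring]
    exact main_sum τ x a0 l a b ((k : ℤ) - m + l).toNat ((k : ℤ) - m + l - 1).toNat
      (by omega)
  · exact gP_snoc τ x a0 l a
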